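/- For every n ≥ 2 and 0 ≤ k ≤ n-1: |E(SSB(n,0))| = 3·|E(Δ_{n-1})| and |E(SSB(n,1))| = |E(Δ_n)|, where |E(Δ_m)| = [X^{m+1}](1+X+X^2)^{m+1}. -/

import Mathlib

/-- Ewald set of SSB(n,k) = {x : x_i ≥ -1 ∀i, x_1 ≤ 1, k x_1 + x_2 + ⋯ + x_n ≤ 1}. -/
def ssbEwald (n k : ℕ) (h : 0 < n) : Set (Fin n → ℤ) :=
  {x | ((∀ i, -1 ≤ x i) ∧ x ⟨0, h⟩ ≤ 1 ∧
          (k : ℤ) * x ⟨0, h⟩ + ∑ i ∈ Finset.univ.erase ⟨0, h⟩, x i ≤ 1) ∧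
       ((∀ i, -1 ≤ -(x i)) ∧ -(x ⟨0, h⟩) ≤ 1 ∧
          (k : ℤ) * (-(x ⟨0, h⟩)) + ∑ i ∈ Finset.univ.erase ⟨0, h⟩, -(x i) ≤ 1)}

/-- Ewald set of the monotone simplex Δ_m. -/
def simplexEwald (m : ℕ) : Set (Fin m → ℤ) :=
  {x | ((∀ i, -1 ≤ x i) ∧ ∑ i, x i ≤ 1) ∧ ((∀ i, -1 ≤ -(x i)) ∧ ∑ i, -(x i) ≤ 1)}

lemma ncard_prod {α β : Type*} (s : Set α) (t : Set β) :
    (s ×ˢ t).ncard = s.ncard * t.ncard := by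
  rw [← Nat.card_coe_set_eq, ← Nat.card_coe_set_eq, ← Nat.card_coe_set_eq,
    Nat.card_congr (Equiv.Set.prod s t), Nat.card_prod]

lemma erase_sum {m : ℕ} (x : Fin (m+1) → ℤ) :
    ∑ i ∈ Finset.univ.erase 0, x i = ∑ i : Fin m, x i.succ := by
  have h1 := Fin.sum_univ_succ x
  have h2 := Finset.sum_erase_add Finset.univ x (Finset.mem_univ (0 : Fin (m+1)))
  omega

lemma ssb_zero_image (m : ℕ) :
    (fun x : Fin (m+1) → ℤ => (x 0, fun i : Fin m => x i.succ)) '' ssbEwald (m+1) 0 (Nat.succ_pos m)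
      = (Set.Icc (-1 : ℤ) 1) ×ˢ simplexEwald m := by
  ext ⟨a, y⟩
  constructor
  · rintro ⟨x, ⟨⟨h1, h2, h3⟩, h4, h5, h6⟩, hx⟩
    simp only [Fin.mk_zero] at h2 h3 h5 h6
    rw [erase_sum] at h3
    rw [erase_sum (fun i => -(x i))] at h6
    simp only [Prod.mk.injEq] at hx
    obtain ⟨rfl, rfl⟩ := hx
    exact ⟨⟨h1 0, h2⟩, ⟨fun i => h1 _, by simpa using h3⟩, fun i => h4 _, by simpa using h6⟩
  · rintro ⟨⟨ha1, ha2⟩, ⟨hy1, hy2⟩, hy3, hy4⟩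
    simp only [Set.mem_Icc] at *
    refine ⟨Fin.cons a y, ⟨⟨?_, by simp [ha2], ?_⟩, ?_, by simp; omega, ?_⟩, by simp⟩
    · exact fun i => Fin.cases (by simpa using ha1) (fun j => hy1 j) i
    · simp only [Fin.mk_zero]
      rw [erase_sum (Fin.cons a y)]; simpa using hy2
    · exact fun i => Fin.cases (by simp; omega) (fun j => hy3 j) i
    · simp only [Fin.mk_zero]
      rw [erase_sum (fun i => -(Fin.cons (α := fun _ => ℤ) a y i))]; simpa using hy4

lemma ssb_one_eq (m : ℕ) :
    ssbEwald (m+1) 1 (Nat.succ_pos m) = simplexEwald (m+1) := by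
  ext x
  have h2 := Finset.sum_erase_add Finset.univ x (Finset.mem_univ (0 : Fin (m+1)))
  have e1 : ∑ i ∈ Finset.univ.erase (0 : Fin (m+1)), -(x i)
      = -∑ i ∈ Finset.univ.erase (0 : Fin (m+1)), x i := Finset.sum_neg_distrib _
  have e2 : ∑ i : Fin (m+1), -(x i) = -∑ i : Fin (m+1), x i := Finset.sum_neg_distrib _
  simp only [ssbEwald, simplexEwald, Set.mem_setOf_eq, Nat.cast_one, one_mul, Fin.mk_zero]
  rw [e1, e2]
  constructor
  · rintro ⟨⟨h1, _, hs⟩, h4, _, hs'⟩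
    exact ⟨⟨h1, by linarith⟩, h4, by linarith⟩
  · rintro ⟨⟨h1, hs⟩, h4, hs'⟩
    exact ⟨⟨h1, by linarith [h4 0], by linarith⟩, h4, by linarith [h1 0], by linarith⟩

/-- |E(SSB(n,0))| = 3|E(Δ_{n-1})| and |E(SSB(n,1))| = |E(Δ_n)|. -/
theorem ewald_SSB_zero_one (n : ℕ) (hn : 2 ≤ n) :
    (ssbEwald n 0 (by omega)).ncard = 3 * (simplexEwald (n - 1)).ncard ∧
    (ssbEwald n 1 (by omega)).ncard = (simplexEwald n).ncard := by
  obtain ⟨m, rfl⟩ : ∃ m, n = m + 1 := ⟨n - 1, by omega⟩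
  rw [show m + 1 - 1 = m from rfl]
  constructor
  · have hinj : Function.Injective
        (fun x : Fin (m+1) → ℤ => (x 0, fun i : Fin m => x i.succ)) := by
      intro x y h
      simp only [Prod.mk.injEq] at h
      funext i
      exact Fin.cases h.1 (fun j => congrFun h.2 j) i
    calc (ssbEwald (m+1) 0 (by omega)).ncard
        = ((fun x : Fin (m+1) → ℤ => (x 0, fun i : Fin m => x i.succ)) ''
            ssbEwald (m+1) 0 (Nat.succ_pos m)).ncard :=
          (Set.ncard_image_of_injective _ hinj).symm
      _ = ((Set.Icc (-1 : ℤ) 1) ×ˢ simplexEwald m).ncard := by rw [ssb_zero_image]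
      _ = 3 * (simplexEwald m).ncard := by
          rw [ncard_prod]
          have : (Set.Icc (-1 : ℤ) 1).ncard = 3 := by
            rw [← Finset.coe_Icc, Set.ncard_coe_finset]
            simp [Int.card_Icc]
          rw [this]
  · exact congrArg Set.ncard (ssb_one_eq m)
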